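/- Let F be an IIA constitution on k ≥ 3 alternatives with n voters voting uniformly at random. If there exist three distinct alternatives a,b,c and two distinct voters i,j with I_i(f^{a>b}) > ε and I_j(f^{b>c}) > ε, then the probability of a non-transitive outcome satisfies P(F) > ε³/36. -/

import Mathlib

/-- Voter `i` is pivotal for `f` at input `x`. -/
def PivotalAt {n : ℕ} (f : (Fin n → Bool) → Bool) (i : Fin n) (x : Fin n → Bool) : Prop :=
  f (Function.update x i true) ≠ f (Function.update x i false)

instance {n : ℕ} (f : (Fin n → Bool) → Bool) (i : Fin n) (x : Fin n → Bool) :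
    Decidable (PivotalAt f i x) := by unfold PivotalAt; infer_instance

/-- The influence of voter `i` on `f`. -/
noncomputable def influence {n : ℕ} (f : (Fin n → Bool) → Bool) (i : Fin n) : ℝ :=
  ((Finset.univ.filter fun x : Fin n → Bool => PivotalAt f i x).card : ℝ) / 2^n

/-- `x^{a>b}` vector of a profile on `k` alternatives. -/
def pairVec {n k : ℕ} (a b : Fin k) (σ : Fin n → Equiv.Perm (Fin k)) : Fin n → Bool :=
  fun i => decide (σ i a < σ i b)


open Finset Equiv

section Aux

lemma holder2 (A B h1 h2 : ℝ) (hA : 0 ≤ A) (hB : 0 ≤ B) (h1n : 0 ≤ h1) (h2n : 0 ≤ h2) :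
    (A^2+B^2)^3 * (h1^2*h2^2) ≤ (A^3*h1+B^3*h2)^2 * (h1^2+h2^2) := by
  nlinarith [mul_nonneg h1n (mul_nonneg (sq_nonneg (A^2*h1 - A*B*h2))
      (by positivity : (0:ℝ) ≤ A^2*h1+2*(A*B*h2))),
    mul_nonneg h2n (mul_nonneg (sq_nonneg (B^2*h2 - A*B*h1))
      (by positivity : (0:ℝ) ≤ B^2*h2+2*(A*B*h1)))]

lemma opnorm2 (C D : ℝ) (hC : 0 ≤ C) (hD : 0 ≤ D) :
    9*((C^3+2*D^3)^2+(2*C^3+D^3)^2)*(C^2+D^2)^3 ≤ 16*((C^3+2*D^3)^2*(2*C^3+D^3)^2) := by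
  have hp : (0:ℝ) ≤ 19*C^8+76*C^7*D+55*C^6*D^2+88*C^5*D^3+172*C^4*D^4+88*C^3*D^5
      +55*C^2*D^6+76*C*D^7+19*D^8 := by positivity
  nlinarith [mul_nonneg (by positivity : (0:ℝ) ≤ (C-D)^4) hp]

lemma sqrt_cube {p : ℝ} (hp : 0 ≤ p) : Real.sqrt (p^3) = Real.sqrt p ^ 3 := by
  have e1 : p^3 = (p*p)*p := by ring
  have e2 : Real.sqrt p ^ 3 = (Real.sqrt p * Real.sqrt p) * Real.sqrt p := by ring
  rw [e1, e2, Real.sqrt_mul (by positivity), Real.sqrt_mul_self hp, Real.mul_self_sqrt hp]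

lemma twopoint (A B C D : ℝ) (hA : 0 ≤ A) (hB : 0 ≤ B) (hC : 0 ≤ C) (hD : 0 ≤ D) :
    (3/4) * Real.sqrt ((A^2+B^2)^3 * (C^2+D^2)^3)
      ≤ A^3*C^3 + B^3*D^3 + 2*(A^3*D^3) + 2*(B^3*C^3) := by
  set h1 := C^3 + 2*D^3 with hh1
  set h2 := 2*C^3 + D^3 with hh2
  have h1n : 0 ≤ h1 := by positivity
  have h2n : 0 ≤ h2 := by positivity
  have hLr : A^3*C^3 + B^3*D^3 + 2*(A^3*D^3) + 2*(B^3*C^3) = A^3*h1 + B^3*h2 := by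
    rw [hh1, hh2]; ring
  set L := A^3*h1 + B^3*h2 with hL
  have hLn : 0 ≤ L := by positivity
  rw [hLr]
  rcases eq_or_lt_of_le (by positivity : (0:ℝ) ≤ C^2+D^2) with h0 | hpos
  · rw [← h0]
    norm_num
    positivity
  · have hCD : 0 < C ∨ 0 < D := by
      by_contra hcon
      push_neg at hcon
      have : C = 0 := le_antisymm hcon.1 hC
      have : D = 0 := le_antisymm hcon.2 hD
      nlinarith
    have h1p : 0 < h1 := by rcases hCD with h | h <;> [skip; skip] <;> positivity
    have h2p : 0 < h2 := by rcases hCD with h | h <;> positivity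
    have k1 := holder2 A B h1 h2 hA hB h1n h2n
    have k2 := opnorm2 C D hC hD
    rw [← hh1, ← hh2] at k2
    have key : 9 * ((A^2+B^2)^3 * (C^2+D^2)^3) ≤ 16 * L^2 := by
      have hq : 0 < h1^2 * h2^2 := by positivity
      rw [← mul_le_mul_iff_of_pos_right hq]
      calc 9 * ((A^2+B^2)^3 * (C^2+D^2)^3) * (h1^2*h2^2)
          = (9 * (C^2+D^2)^3) * ((A^2+B^2)^3 * (h1^2*h2^2)) := by ring
        _ ≤ (9 * (C^2+D^2)^3) * (L^2 * (h1^2+h2^2)) := by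
            apply mul_le_mul_of_nonneg_left k1 (by positivity)
        _ = L^2 * (9*(h1^2+h2^2)*(C^2+D^2)^3) := by ring
        _ ≤ L^2 * (16*(h1^2*h2^2)) := mul_le_mul_of_nonneg_left k2 (sq_nonneg L)
        _ = 16 * L^2 * (h1^2*h2^2) := by ring
    have : Real.sqrt ((A^2+B^2)^3 * (C^2+D^2)^3) ≤ (4/3) * L := by
      rw [show (4/3) * L = Real.sqrt (((4/3)*L)^2) by
        rw [Real.sqrt_sq (by positivity)]]
      apply Real.sqrt_le_sqrt
      nlinarith
    linarith


noncomputable def wt (s t : Bool) : ℝ := if s = t then 1 else 2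

lemma wt_nonneg (s t : Bool) : 0 ≤ wt s t := by unfold wt; split <;> norm_num

lemma sum_cons {n : ℕ} (φ : (Fin (n+1) → Bool) → ℝ) :
    ∑ x : Fin (n+1) → Bool, φ x = ∑ s : Bool, ∑ x : Fin n → Bool, φ (Fin.cons s x) := by
  rw [← (Fin.consEquiv (fun _ : Fin (n+1) => Bool)).sum_comp φ]
  rw [Fintype.sum_prod_type]
  rfl

lemma rhc : ∀ (n : ℕ) (u w : (Fin n → Bool) → ℝ), (∀ x, 0 ≤ u x) → (∀ y, 0 ≤ w y) →
    (3/4:ℝ)^n * Real.sqrt ((∑ x, u x ^ 2)^3 * (∑ y, w y ^ 2)^3)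
      ≤ ∑ x, ∑ y, (∏ v, wt (x v) (y v)) * (u x ^ 3 * w y ^ 3) := by
  intro n
  induction n with
  | zero =>
      intro u w hu hw
      have key : ∀ (f : (Fin 0 → Bool) → ℝ), ∑ x, f x = f (fun x => x.elim0) :=
        fun f => Fintype.sum_subsingleton _ _
      simp only [key, Finset.univ_eq_empty, Finset.prod_empty, pow_zero, one_mul]
      set p := u fun x => x.elim0 with hp
      set q := w fun x => x.elim0 with hq
      have hpn : 0 ≤ p := hu _
      have hqn : 0 ≤ q := hw _
      have e : (p^2)^3 * (q^2)^3 = (p^3*q^3)^2 := by ring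
      rw [e, Real.sqrt_sq (by positivity)]
  | succ n ih =>
      intro u w hu hw
      have hR : (∑ x : Fin (n+1) → Bool, ∑ y : Fin (n+1) → Bool,
            (∏ v, wt (x v) (y v)) * (u x ^ 3 * w y ^ 3))
          = ∑ s : Bool, ∑ t : Bool, wt s t * ∑ x : Fin n → Bool, ∑ y : Fin n → Bool,
              ((∏ v, wt (x v) (y v)) * (u (Fin.cons s x) ^ 3 * w (Fin.cons t y) ^ 3)) := by
        rw [sum_cons (fun x => ∑ y : Fin (n+1) → Bool,
          (∏ v, wt (x v) (y v)) * (u x ^ 3 * w y ^ 3))]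
        refine Finset.sum_congr rfl (fun s _ => ?_)
        have e1 : ∀ x : Fin n → Bool,
            (∑ y : Fin (n+1) → Bool,
              (∏ v, wt ((Fin.cons s x : Fin (n+1) → Bool) v) (y v))
                * (u (Fin.cons s x) ^ 3 * w y ^ 3))
            = ∑ t : Bool, ∑ y : Fin n → Bool,
                (wt s t * ∏ v : Fin n, wt (x v) (y v))
                  * (u (Fin.cons s x) ^ 3 * w (Fin.cons t y) ^ 3) := by
          intro x
          rw [sum_cons (fun y => (∏ v, wt ((Fin.cons s x : Fin (n+1) → Bool) v) (y v))
            * (u (Fin.cons s x) ^ 3 * w y ^ 3))]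
          refine Finset.sum_congr rfl (fun t _ => Finset.sum_congr rfl (fun y _ => ?_))
          congr 1
          rw [Fin.prod_univ_succ]
          simp [Fin.cons_zero, Fin.cons_succ]
        simp only [e1]
        rw [Finset.sum_comm]
        refine Finset.sum_congr rfl (fun t _ => ?_)
        rw [Finset.mul_sum]
        refine Finset.sum_congr rfl (fun x _ => ?_)
        rw [Finset.mul_sum]
        refine Finset.sum_congr rfl (fun y _ => ?_)
        ring
      set P := fun s : Bool => ∑ x : Fin n → Bool, u (Fin.cons s x) ^ 2 with hP
      set Q := fun t : Bool => ∑ y : Fin n → Bool, w (Fin.cons t y) ^ 2 with hQ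
      have hPn : ∀ s, 0 ≤ P s := fun s => Finset.sum_nonneg (fun x _ => sq_nonneg _)
      have hQn : ∀ t, 0 ≤ Q t := fun t => Finset.sum_nonneg (fun y _ => sq_nonneg _)
      set U := fun s : Bool => Real.sqrt (P s) with hU
      set V := fun t : Bool => Real.sqrt (Q t) with hV
      have hUsq : ∀ s, U s ^ 2 = P s := fun s => Real.sq_sqrt (hPn s)
      have hVsq : ∀ t, V t ^ 2 = Q t := fun t => Real.sq_sqrt (hQn t)
      have hsumu : ∑ x : Fin (n+1) → Bool, u x ^ 2 = P true + P false := by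
        rw [sum_cons (fun x => u x ^ 2), Fintype.sum_bool]
      have hsumw : ∑ y : Fin (n+1) → Bool, w y ^ 2 = Q true + Q false := by
        rw [sum_cons (fun y => w y ^ 2), Fintype.sum_bool]
      have hIH : ∀ s t : Bool, (3/4:ℝ)^n * (U s ^ 3 * V t ^ 3)
          ≤ ∑ x : Fin n → Bool, ∑ y : Fin n → Bool,
              ((∏ v, wt (x v) (y v)) * (u (Fin.cons s x) ^ 3 * w (Fin.cons t y) ^ 3)) := by
        intro s t
        have := ih (fun x => u (Fin.cons s x)) (fun y => w (Fin.cons t y))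
          (fun x => hu _) (fun y => hw _)
        have e : Real.sqrt ((P s)^3 * (Q t)^3) = U s ^ 3 * V t ^ 3 := by
          rw [Real.sqrt_mul (by positivity), sqrt_cube (hPn s), sqrt_cube (hQn t)]
        rw [← e]
        exact this
      have htp : (3/4:ℝ) * Real.sqrt ((P true + P false)^3 * (Q true + Q false)^3)
          ≤ U true^3*V true^3 + U false^3*V false^3
            + 2*(U true^3*V false^3) + 2*(U false^3*V true^3) := by
        have := twopoint (U true) (U false) (V true) (V false)
          (Real.sqrt_nonneg _) (Real.sqrt_nonneg _) (Real.sqrt_nonneg _) (Real.sqrt_nonneg _)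
        rwa [hUsq, hUsq, hVsq, hVsq] at this
      rw [hR, hsumu, hsumw]
      calc (3/4:ℝ)^(n+1) * Real.sqrt ((P true + P false)^3 * (Q true + Q false)^3)
          = (3/4:ℝ)^n * ((3/4) * Real.sqrt ((P true + P false)^3 * (Q true + Q false)^3)) := by
            ring
        _ ≤ (3/4:ℝ)^n * (U true^3*V true^3 + U false^3*V false^3
              + 2*(U true^3*V false^3) + 2*(U false^3*V true^3)) := by
            apply mul_le_mul_of_nonneg_left htp (by positivity)
        _ = ∑ s : Bool, ∑ t : Bool, wt s t * ((3/4:ℝ)^n * (U s ^ 3 * V t ^ 3)) := by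
            rw [Fintype.sum_bool, Fintype.sum_bool, Fintype.sum_bool]
            unfold wt
            norm_num
            ring
        _ ≤ ∑ s : Bool, ∑ t : Bool, wt s t * ∑ x : Fin n → Bool, ∑ y : Fin n → Bool,
              ((∏ v, wt (x v) (y v)) * (u (Fin.cons s x) ^ 3 * w (Fin.cons t y) ^ 3)) := by
            refine Finset.sum_le_sum (fun s _ => Finset.sum_le_sum (fun t _ => ?_))
            exact mul_le_mul_of_nonneg_left (hIH s t) (wt_nonneg s t)

variable {k : ℕ}

/-- relative-order triple of `g` on `(a,b,c)`. -/
def tri (a b c : Fin k) (g : Equiv.Perm (Fin k)) : Bool × Bool × Bool :=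
  (decide (g a < g b), decide (g b < g c), decide (g c < g a))

lemma decide_flip {u v : Fin k} (h : u ≠ v) : decide (v < u) = !decide (u < v) := by
  rcases lt_or_gt_of_ne h with hlt | hlt
  · simp [hlt, not_lt_of_gt hlt, le_of_lt]
  · simp [hlt, not_lt_of_gt hlt]

section abc
variable (a b c : Fin k) (hab : a ≠ b) (hbc : b ≠ c) (hac : a ≠ c)

include hab hbc hac

lemma tri_nae (g : Equiv.Perm (Fin k)) :
    tri a b c g ≠ (true, true, true) ∧ tri a b c g ≠ (false, false, false) := by
  have iab : g a ≠ g b := fun h => hab (g.injective h)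
  have ibc : g b ≠ g c := fun h => hbc (g.injective h)
  have iac : g a ≠ g c := fun h => hac (g.injective h)
  unfold tri
  constructor
  · intro h
    rw [Prod.ext_iff, Prod.ext_iff] at h
    simp only [decide_eq_true_eq] at h
    exact absurd (lt_trans h.1 h.2.1) (not_lt_of_gt h.2.2)
  · intro h
    rw [Prod.ext_iff, Prod.ext_iff] at h
    simp only [decide_eq_false_iff_not, not_lt] at h
    have h1 := lt_of_le_of_ne h.1 (Ne.symm iab)
    have h2 := lt_of_le_of_ne h.2.1 (Ne.symm ibc)
    exact absurd (lt_trans h2 h1) (not_lt_of_gt (lt_of_le_of_ne h.2.2 iac))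

lemma tri_mul_sab (g : Equiv.Perm (Fin k)) :
    tri a b c (g * Equiv.swap a b)
      = (!(tri a b c g).1, !(tri a b c g).2.2, !(tri a b c g).2.1) := by
  have iab : g a ≠ g b := fun h => hab (g.injective h)
  have ibc : g b ≠ g c := fun h => hbc (g.injective h)
  have iac : g a ≠ g c := fun h => hac (g.injective h)
  unfold tri
  simp only [Equiv.Perm.mul_apply, Equiv.swap_apply_left, Equiv.swap_apply_right,
    Equiv.swap_apply_of_ne_of_ne (Ne.symm hac) (Ne.symm hbc)]
  rw [decide_flip iab, decide_flip (Ne.symm iac), decide_flip ibc]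

lemma tri_mul_sbc (g : Equiv.Perm (Fin k)) :
    tri a b c (g * Equiv.swap b c)
      = (!(tri a b c g).2.2, !(tri a b c g).2.1, !(tri a b c g).1) := by
  have iab : g a ≠ g b := fun h => hab (g.injective h)
  have ibc : g b ≠ g c := fun h => hbc (g.injective h)
  have iac : g a ≠ g c := fun h => hac (g.injective h)
  unfold tri
  simp only [Equiv.Perm.mul_apply, Equiv.swap_apply_left, Equiv.swap_apply_right,
    Equiv.swap_apply_of_ne_of_ne hab hac]
  rw [decide_flip (Ne.symm iac), decide_flip ibc, decide_flip iab]

lemma tri_mul_sac (g : Equiv.Perm (Fin k)) :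
    tri a b c (g * Equiv.swap a c)
      = (!(tri a b c g).2.1, !(tri a b c g).1, !(tri a b c g).2.2) := by
  have iab : g a ≠ g b := fun h => hab (g.injective h)
  have ibc : g b ≠ g c := fun h => hbc (g.injective h)
  have iac : g a ≠ g c := fun h => hac (g.injective h)
  unfold tri
  simp only [Equiv.Perm.mul_apply, Equiv.swap_apply_left, Equiv.swap_apply_right,
    Equiv.swap_apply_of_ne_of_ne (Ne.symm hab) hbc]
  rw [decide_flip ibc, decide_flip iab, decide_flip (Ne.symm iac)]

lemma cnt_swap_eq (π : Equiv.Perm (Fin k)) (hπ : π * π = 1)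
    (e : Bool×Bool×Bool → Bool×Bool×Bool)
    (he : ∀ g, tri a b c (g * π) = e (tri a b c g)) (p : Bool×Bool×Bool)
    (hep : e (e p) = p) :
    (univ.filter fun g => tri a b c g = p).card
      = (univ.filter fun g => tri a b c g = e p).card := by
  apply Finset.card_bij' (fun g _ => g * π) (fun g _ => g * π)
  · intro g hg
    simp only [Finset.mem_filter, Finset.mem_univ, true_and] at hg ⊢
    rw [he, hg]
  · intro g hg
    simp only [Finset.mem_filter, Finset.mem_univ, true_and] at hg ⊢
    rw [he, hg, hep]
  · intro g hg
    rw [mul_assoc, hπ, mul_one]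
  · intro g hg
    rw [mul_assoc, hπ, mul_one]

/-- the six noncyclic-pattern classes all have the same cardinality `m`. -/
lemma cnt_classes (p : Bool × Bool × Bool) (h1 : p ≠ (true,true,true))
    (h2 : p ≠ (false,false,false)) :
    (univ.filter fun g => tri a b c g = p).card
      = (univ.filter fun g => tri a b c g = (true,true,false)).card := by
  have sab2 : Equiv.swap a b * Equiv.swap a b = 1 := Equiv.swap_mul_self a b
  have sbc2 : Equiv.swap b c * Equiv.swap b c = 1 := Equiv.swap_mul_self b c
  have sac2 : Equiv.swap a c * Equiv.swap a c = 1 := Equiv.swap_mul_self a c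
  have eab := cnt_swap_eq a b c hab hbc hac (Equiv.swap a b) sab2
    (fun q => (!q.1, !q.2.2, !q.2.1)) (tri_mul_sab a b c hab hbc hac)
  have ebc := cnt_swap_eq a b c hab hbc hac (Equiv.swap b c) sbc2
    (fun q => (!q.2.2, !q.2.1, !q.1)) (tri_mul_sbc a b c hab hbc hac)
  have eac := cnt_swap_eq a b c hab hbc hac (Equiv.swap a c) sac2
    (fun q => (!q.2.1, !q.1, !q.2.2)) (tri_mul_sac a b c hab hbc hac)
  rcases p with ⟨x, y, z⟩
  rcases x <;> rcases y <;> rcases z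
  · exact absurd rfl h2
  · -- (F,F,T) = T3 (T,T,F)
    rw [show ((false,false,true) : Bool×Bool×Bool)
        = (fun q : Bool×Bool×Bool => (!q.2.1, !q.1, !q.2.2)) (true,true,false) from rfl]
    rw [← eac _ rfl]
  · -- (F,T,F) = T1 (T,T,F)
    rw [show ((false,true,false) : Bool×Bool×Bool)
        = (fun q : Bool×Bool×Bool => (!q.1, !q.2.2, !q.2.1)) (true,true,false) from rfl]
    rw [← eab _ rfl]
  · -- (F,T,T) = T1 (T,F,F), (T,F,F) = T2 (T,T,F)
    rw [show ((false,true,true) : Bool×Bool×Bool)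
        = (fun q : Bool×Bool×Bool => (!q.1, !q.2.2, !q.2.1)) (true,false,false) from rfl]
    rw [← eab _ rfl]
    rw [show ((true,false,false) : Bool×Bool×Bool)
        = (fun q : Bool×Bool×Bool => (!q.2.2, !q.2.1, !q.1)) (true,true,false) from rfl]
    rw [← ebc _ rfl]
  · -- (T,F,F) = T2 (T,T,F)
    rw [show ((true,false,false) : Bool×Bool×Bool)
        = (fun q : Bool×Bool×Bool => (!q.2.2, !q.2.1, !q.1)) (true,true,false) from rfl]
    rw [← ebc _ rfl]
  · -- (T,F,T) = T2 (F,T,F), (F,T,F) = T1 (T,T,F)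
    rw [show ((true,false,true) : Bool×Bool×Bool)
        = (fun q : Bool×Bool×Bool => (!q.2.2, !q.2.1, !q.1)) (false,true,false) from rfl]
    rw [← ebc _ rfl]
    rw [show ((false,true,false) : Bool×Bool×Bool)
        = (fun q : Bool×Bool×Bool => (!q.1, !q.2.2, !q.2.1)) (true,true,false) from rfl]
    rw [← eab _ rfl]
  · rfl
  · exact absurd rfl h1

/-- The "number of permutations realizing pattern (true,true,false)". -/
lemma npair_eq (s t : Bool) :
    (univ.filter fun g : Equiv.Perm (Fin k) =>
        decide (g a < g b) = s ∧ decide (g b < g c) = t).card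
      = (if s = t then 1 else 2)
          * (univ.filter fun g => tri a b c g = (true,true,false)).card := by
  have split : (univ.filter fun g : Equiv.Perm (Fin k) =>
        decide (g a < g b) = s ∧ decide (g b < g c) = t).card
      = (univ.filter fun g => tri a b c g = (s,t,true)).card
        + (univ.filter fun g => tri a b c g = (s,t,false)).card := by
    rw [← Finset.card_filter_add_card_filter_not
      (p := fun g => decide (g c < g a) = true)]
    · congr 1
      · refine congrArg Finset.card ?_
        rw [Finset.filter_filter]
        apply Finset.filter_congr
        intro g _
        unfold tri
        simp only [Prod.ext_iff]
        tauto
      · refine congrArg Finset.card ?_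
        rw [Finset.filter_filter]
        apply Finset.filter_congr
        intro g _
        unfold tri
        simp only [Prod.ext_iff, Bool.not_eq_true]
        tauto
  rw [split]
  have hm := cnt_classes a b c hab hbc hac
  have hTTT : (univ.filter fun g => tri a b c g = (true,true,true)).card = 0 := by
    rw [Finset.card_eq_zero, Finset.filter_eq_empty_iff]
    exact fun g _ => (tri_nae a b c hab hbc hac g).1
  have hFFF : (univ.filter fun g => tri a b c g = (false,false,false)).card = 0 := by
    rw [Finset.card_eq_zero, Finset.filter_eq_empty_iff]
    exact fun g _ => (tri_nae a b c hab hbc hac g).2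
  rcases s <;> rcases t
  · rw [hm (false,false,true) (by decide) (by decide), hFFF]
    norm_num
  · rw [hm (false,true,true) (by decide) (by decide),
       hm (false,true,false) (by decide) (by decide)]
    norm_num
    ring
  · rw [hm (true,false,true) (by decide) (by decide),
       hm (true,false,false) (by decide) (by decide)]
    norm_num
    ring
  · rw [hTTT]
    norm_num

/-- total count: `|Perm| = 6 m`. -/
lemma total_eq :
    Fintype.card (Equiv.Perm (Fin k))
      = 6 * (univ.filter fun g => tri a b c g = (true,true,false)).card := by
  have e1 : (univ : Finset (Equiv.Perm (Fin k))).card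
      = (univ.filter fun g : Equiv.Perm (Fin k) =>
          decide (g a < g b) = true).card
        + (univ.filter fun g : Equiv.Perm (Fin k) =>
          decide (g a < g b) = false).card := by
    rw [← Finset.card_filter_add_card_filter_not
      (p := fun g : Equiv.Perm (Fin k) => decide (g a < g b) = true)]
    congr 1
    refine congrArg Finset.card ?_
    apply Finset.filter_congr
    intro g _
    simp
  have e2 : ∀ s : Bool, (univ.filter fun g : Equiv.Perm (Fin k) =>
        decide (g a < g b) = s).card
      = (univ.filter fun g : Equiv.Perm (Fin k) =>
          decide (g a < g b) = s ∧ decide (g b < g c) = true).card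
        + (univ.filter fun g : Equiv.Perm (Fin k) =>
          decide (g a < g b) = s ∧ decide (g b < g c) = false).card := by
    intro s
    rw [← Finset.card_filter_add_card_filter_not
      (p := fun g : Equiv.Perm (Fin k) => decide (g b < g c) = true)]
    congr 1
    · rw [Finset.filter_filter]
    · refine congrArg Finset.card ?_
      rw [Finset.filter_filter]
      apply Finset.filter_congr
      intro g _
      simp
  rw [Finset.card_univ] at e1
  rw [e1, e2, e2, npair_eq a b c hab hbc hac, npair_eq a b c hab hbc hac,
    npair_eq a b c hab hbc hac, npair_eq a b c hab hbc hac]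
  norm_num
  ring

/-- realizability: any non-cyclic pattern is attained within the explicit 6-element coset. -/
lemma realize (g : Equiv.Perm (Fin k)) (p : Bool × Bool × Bool)
    (h1 : p ≠ (true,true,true)) (h2 : p ≠ (false,false,false)) :
    ∃ π ∈ ({1, Equiv.swap a b, Equiv.swap b c, Equiv.swap a c,
        Equiv.swap b c * Equiv.swap a b, Equiv.swap a b * Equiv.swap b c}
        : Finset (Equiv.Perm (Fin k))), tri a b c (g * π) = p := by
  classical
  have hcur := tri_nae a b c hab hbc hac g
  have hreach : ∀ cur tgt : Bool × Bool × Bool,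
      cur ≠ (true,true,true) → cur ≠ (false,false,false) →
      tgt ≠ (true,true,true) → tgt ≠ (false,false,false) →
      tgt = cur ∨ tgt = (!cur.1, !cur.2.2, !cur.2.1)
        ∨ tgt = (!cur.2.2, !cur.2.1, !cur.1)
        ∨ tgt = (!cur.2.1, !cur.1, !cur.2.2)
        ∨ tgt = (let q := (!cur.2.2, !cur.2.1, !cur.1);
            ((!q.1, !q.2.2, !q.2.1) : Bool × Bool × Bool))
        ∨ tgt = (let q := (!cur.1, !cur.2.2, !cur.2.1);
            ((!q.2.2, !q.2.1, !q.1) : Bool × Bool × Bool)) := by decide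
  rcases hreach (tri a b c g) p hcur.1 hcur.2 h1 h2 with h | h | h | h | h | h
  · exact ⟨1, by simp, by rw [mul_one, h]⟩
  · exact ⟨Equiv.swap a b, by simp, by rw [tri_mul_sab a b c hab hbc hac, h]⟩
  · exact ⟨Equiv.swap b c, by simp, by rw [tri_mul_sbc a b c hab hbc hac, h]⟩
  · exact ⟨Equiv.swap a c, by simp, by rw [tri_mul_sac a b c hab hbc hac, h]⟩
  · refine ⟨Equiv.swap b c * Equiv.swap a b, by simp, ?_⟩
    rw [← mul_assoc, tri_mul_sab a b c hab hbc hac, tri_mul_sbc a b c hab hbc hac, h]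
  · refine ⟨Equiv.swap a b * Equiv.swap b c, by simp, ?_⟩
    rw [← mul_assoc, tri_mul_sbc a b c hab hbc hac, tri_mul_sab a b c hab hbc hac, h]

end abc

lemma pivot_choice {n : ℕ} (F : (Fin n → Bool) → Bool) (i : Fin n) (x : Fin n → Bool)
    (h : PivotalAt F i x) (v : Bool) : ∃ s, F (Function.update x i s) = v := by
  unfold PivotalAt at h
  by_cases hT : F (Function.update x i true) = v
  · exact ⟨true, hT⟩
  · refine ⟨false, ?_⟩
    cases v <;> cases hT' : F (Function.update x i true) <;>
      cases hF' : F (Function.update x i false) <;> simp_all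

section main
variable {n k : ℕ} (f : Fin k → Fin k → (Fin n → Bool) → Bool)
  (a b c : Fin k) (i j : Fin n)

theorem step2
    (hanti : ∀ (a b : Fin k), a ≠ b → ∀ σ : Fin n → Equiv.Perm (Fin k),
      f b a (pairVec b a σ) = !f a b (pairVec a b σ))
    (hab : a ≠ b) (hbc : b ≠ c) (hac : a ≠ c) (hij : i ≠ j)
    [DecidablePred fun σ : Fin n → Equiv.Perm (Fin k) =>
        ∃ p q r : Fin k, p ≠ q ∧ q ≠ r ∧ p ≠ r ∧
          f p q (pairVec p q σ) = true ∧ f q r (pairVec q r σ) = true ∧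
          f r p (pairVec r p σ) = true] :
    (univ.filter fun σ : Fin n → Equiv.Perm (Fin k) =>
        PivotalAt (f a b) i (pairVec a b σ) ∧ PivotalAt (f b c) j (pairVec b c σ)).card
      ≤ 36 * (univ.filter fun σ : Fin n → Equiv.Perm (Fin k) =>
        ∃ p q r : Fin k, p ≠ q ∧ q ≠ r ∧ p ≠ r ∧
          f p q (pairVec p q σ) = true ∧ f q r (pairVec q r σ) = true ∧
          f r p (pairVec r p σ) = true).card := by
  classical
  set H₀ : Finset (Equiv.Perm (Fin k)) :=
    {1, Equiv.swap a b, Equiv.swap b c, Equiv.swap a c,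
      Equiv.swap b c * Equiv.swap a b, Equiv.swap a b * Equiv.swap b c} with hH₀
  have h6 : H₀.card ≤ 6 :=
    (Finset.card_insert_le _ _).trans (Nat.succ_le_succ
      ((Finset.card_insert_le _ _).trans (Nat.succ_le_succ
      ((Finset.card_insert_le _ _).trans (Nat.succ_le_succ
      ((Finset.card_insert_le _ _).trans (Nat.succ_le_succ
      ((Finset.card_insert_le _ _).trans (Nat.succ_le_succ
      (le_of_eq (Finset.card_singleton _)))))))))))
  set Par := (univ.filter fun σ : Fin n → Equiv.Perm (Fin k) =>
        ∃ p q r : Fin k, p ≠ q ∧ q ≠ r ∧ p ≠ r ∧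
          f p q (pairVec p q σ) = true ∧ f q r (pairVec q r σ) = true ∧
          f r p (pairVec r p σ) = true) with hPar
  -- key existence
  have key : ∀ σ : Fin n → Equiv.Perm (Fin k),
      PivotalAt (f a b) i (pairVec a b σ) → PivotalAt (f b c) j (pairVec b c σ) →
      ∃ P : Equiv.Perm (Fin k) × Equiv.Perm (Fin k), P.1 ∈ H₀ ∧ P.2 ∈ H₀ ∧
        (Function.update (Function.update σ i (σ i * P.1)) j (σ j * P.2)) ∈ Par := by
    intro σ h1 h2
    set x := pairVec a b σ with hx
    set y := pairVec b c σ with hy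
    set z := pairVec c a σ with hz
    set w := f c a (Function.update (Function.update z i (!(y i))) j (!(x j))) with hw
    obtain ⟨s₁, hs₁⟩ := pivot_choice _ i x h1 w
    obtain ⟨t₁, ht₁⟩ := pivot_choice _ j y h2 w
    obtain ⟨πi, hπiH, hπi⟩ := realize a b c hab hbc hac (σ i) (s₁, y i, !(y i))
      (by cases s₁ <;> cases hyi : y i <;> simp) (by cases s₁ <;> cases hyi : y i <;> simp)
    obtain ⟨πj, hπjH, hπj⟩ := realize a b c hab hbc hac (σ j) (x j, t₁, !(x j))
      (by cases t₁ <;> cases hxj : x j <;> simp) (by cases t₁ <;> cases hxj : x j <;> simp)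
    refine ⟨(πi, πj), hπiH, hπjH, ?_⟩
    set σ' := Function.update (Function.update σ i (σ i * πi)) j (σ j * πj) with hσ'
    have hσ'i : σ' i = σ i * πi := by
      rw [hσ', Function.update_of_ne hij, Function.update_self]
    have hσ'j : σ' j = σ j * πj := by
      rw [hσ', Function.update_self]
    have hσ'v : ∀ v, v ≠ i → v ≠ j → σ' v = σ v := by
      intro v hvi hvj
      rw [hσ', Function.update_of_ne hvj, Function.update_of_ne hvi]
    have hx' : pairVec a b σ' = Function.update x i s₁ := by
      funext v
      by_cases hvi : v = i
      · rw [hvi, Function.update_self]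
        show decide (σ' i a < σ' i b) = s₁
        rw [hσ'i]
        exact congrArg Prod.fst hπi
      · rw [Function.update_of_ne hvi]
        by_cases hvj : v = j
        · rw [hvj]
          show decide (σ' j a < σ' j b) = x j
          rw [hσ'j]
          exact congrArg Prod.fst hπj
        · show decide (σ' v a < σ' v b) = x v
          rw [hσ'v v hvi hvj]
          rfl
    have hy' : pairVec b c σ' = Function.update y j t₁ := by
      funext v
      by_cases hvj : v = j
      · rw [hvj, Function.update_self]
        show decide (σ' j b < σ' j c) = t₁
        rw [hσ'j]
        exact congrArg (fun p : Bool × Bool × Bool => p.2.1) hπj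
      · rw [Function.update_of_ne hvj]
        by_cases hvi : v = i
        · rw [hvi]
          show decide (σ' i b < σ' i c) = y i
          rw [hσ'i]
          exact congrArg (fun p : Bool × Bool × Bool => p.2.1) hπi
        · show decide (σ' v b < σ' v c) = y v
          rw [hσ'v v hvi hvj]
          rfl
    have hz' : pairVec c a σ'
        = Function.update (Function.update z i (!(y i))) j (!(x j)) := by
      funext v
      by_cases hvj : v = j
      · rw [hvj, Function.update_self]
        show decide (σ' j c < σ' j a) = !(x j)
        rw [hσ'j]
        exact congrArg (fun p : Bool × Bool × Bool => p.2.2) hπj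
      · rw [Function.update_of_ne hvj]
        by_cases hvi : v = i
        · rw [hvi, Function.update_self]
          show decide (σ' i c < σ' i a) = !(y i)
          rw [hσ'i]
          exact congrArg (fun p : Bool × Bool × Bool => p.2.2) hπi
        · rw [Function.update_of_ne hvi]
          show decide (σ' v c < σ' v a) = z v
          rw [hσ'v v hvi hvj]
          rfl
    have fab' : f a b (pairVec a b σ') = w := by rw [hx', hs₁]
    have fbc' : f b c (pairVec b c σ') = w := by rw [hy', ht₁]
    have fca' : f c a (pairVec c a σ') = w := by rw [hz']
    rw [hPar, Finset.mem_filter]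
    refine ⟨Finset.mem_univ _, ?_⟩
    cases hwv : w
    · refine ⟨c, b, a, Ne.symm hbc, Ne.symm hab, Ne.symm hac, ?_, ?_, ?_⟩
      · rw [hanti b c hbc σ', fbc', hwv]; rfl
      · rw [hanti a b hab σ', fab', hwv]; rfl
      · rw [hanti c a (Ne.symm hac) σ', fca', hwv]; rfl
    · exact ⟨a, b, c, hab, hbc, hac, by rw [fab', hwv], by rw [fbc', hwv],
        by rw [fca', hwv]⟩
  -- injection counting
  set AB := (univ.filter fun σ : Fin n → Equiv.Perm (Fin k) =>
      PivotalAt (f a b) i (pairVec a b σ) ∧ PivotalAt (f b c) j (pairVec b c σ)) with hAB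
  set P : (Fin n → Equiv.Perm (Fin k)) → Equiv.Perm (Fin k) × Equiv.Perm (Fin k) :=
    fun σ => if h : PivotalAt (f a b) i (pairVec a b σ)
        ∧ PivotalAt (f b c) j (pairVec b c σ)
      then (key σ h.1 h.2).choose else (1,1) with hP
  have hcard : AB.card ≤ (Par ×ˢ (H₀ ×ˢ H₀)).card := by
    apply Finset.card_le_card_of_injOn
      (fun σ => (Function.update (Function.update σ i (σ i * (P σ).1)) j
        (σ j * (P σ).2), P σ))
    · intro σ hσ
      rw [hAB, Finset.mem_coe, Finset.mem_filter] at hσ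
      have hd : PivotalAt (f a b) i (pairVec a b σ)
          ∧ PivotalAt (f b c) j (pairVec b c σ) := hσ.2
      have hPs : P σ = (key σ hd.1 hd.2).choose := by rw [hP]; exact dif_pos hd
      obtain ⟨m1, m2, m3⟩ := (key σ hd.1 hd.2).choose_spec
      rw [Finset.mem_coe, Finset.mem_product, Finset.mem_product]; dsimp only
      refine ⟨?_, ?_, ?_⟩
      · rw [hPs]; exact m3
      · rw [hPs]; exact m1
      · rw [hPs]; exact m2
    · intro σ hσ τ hτ heq
      simp only [Prod.mk.injEq] at heq
      obtain ⟨heq1, heq2⟩ := heq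
      rw [heq2] at heq1
      funext v
      rcases eq_or_ne v i with rfl | hvi
      · have := congrFun heq1 v
        rw [Function.update_of_ne hij, Function.update_of_ne hij,
          Function.update_self, Function.update_self] at this
        exact mul_right_cancel this
      · rcases eq_or_ne v j with rfl | hvj
        · have := congrFun heq1 v
          rw [Function.update_self, Function.update_self] at this
          exact mul_right_cancel this
        · have := congrFun heq1 v
          rw [Function.update_of_ne hvj, Function.update_of_ne hvi,
            Function.update_of_ne hvj, Function.update_of_ne hvi] at this
          exact this
  calc AB.card ≤ (Par ×ˢ (H₀ ×ˢ H₀)).card := hcard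
    _ = Par.card * (H₀.card * H₀.card) := by
        rw [Finset.card_product, Finset.card_product]
    _ ≤ Par.card * 36 := by
        apply Nat.mul_le_mul_left
        calc H₀.card * H₀.card ≤ 6 * 6 := Nat.mul_le_mul h6 h6
          _ = 36 := rfl
    _ = 36 * Par.card := Nat.mul_comm _ _

end main
end Aux

/-- Quantitative two-pivot theorem: for an IIA constitution on `k ≥ 3` alternatives
given by pairwise functions `f a b`, if two distinct voters have influence `> ε` on
the pairwise functions of two different pairs `(a,b)` and `(b,c)`, then the
probability (under uniform voting) of a non-transitive outcome exceeds `ε³/36`.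
Non-transitivity of the outcome means the pairwise social preferences contain a
3-cycle. -/
theorem stmt_8 (n k : ℕ) (hk : 3 ≤ k)
    (f : Fin k → Fin k → (Fin n → Bool) → Bool)
    (hanti : ∀ (a b : Fin k), a ≠ b → ∀ σ : Fin n → Equiv.Perm (Fin k),
      f b a (pairVec b a σ) = !f a b (pairVec a b σ))
    (a b c : Fin k) (hab : a ≠ b) (hbc : b ≠ c) (hac : a ≠ c)
    (i j : Fin n) (hij : i ≠ j) (ε : ℝ) (hε : 0 < ε)
    (hi : ε < influence (f a b) i) (hj : ε < influence (f b c) j) :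
    ε^3 / 36 < ((Finset.univ.filter fun σ : Fin n → Equiv.Perm (Fin k) =>
        ∃ p q r : Fin k, p ≠ q ∧ q ≠ r ∧ p ≠ r ∧
          f p q (pairVec p q σ) = true ∧ f q r (pairVec q r σ) = true ∧
          f r p (pairVec r p σ) = true).card : ℝ) /
      (Fintype.card (Equiv.Perm (Fin k)))^n := by
  classical
  unfold influence at hi hj
  -- notation
  set m := (univ.filter fun g : Equiv.Perm (Fin k) => tri a b c g = (true,true,false)).card
    with hmdef
  have hK6 : Fintype.card (Equiv.Perm (Fin k)) = 6 * m := total_eq a b c hab hbc hac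
  have hKpos : 0 < Fintype.card (Equiv.Perm (Fin k)) := Fintype.card_pos
  have hmpos : 0 < m := by omega
  set χA : (Fin n → Bool) → ℝ := fun x => if PivotalAt (f a b) i x then 1 else 0 with hχA
  set χB : (Fin n → Bool) → ℝ := fun y => if PivotalAt (f b c) j y then 1 else 0 with hχB
  have hχAn : ∀ x, 0 ≤ χA x := fun x => by rw [hχA]; dsimp only; split <;> norm_num
  have hχBn : ∀ y, 0 ≤ χB y := fun y => by rw [hχB]; dsimp only; split <;> norm_num
  have hA2 : ∑ x : Fin n → Bool, χA x ^ 2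
      = ((univ.filter fun x : Fin n → Bool => PivotalAt (f a b) i x).card : ℝ) := by
    rw [← Finset.sum_boole]
    refine Finset.sum_congr rfl (fun x _ => ?_)
    rw [hχA]; dsimp only; split <;> norm_num
  have hB2 : ∑ y : Fin n → Bool, χB y ^ 2
      = ((univ.filter fun y : Fin n → Bool => PivotalAt (f b c) j y).card : ℝ) := by
    rw [← Finset.sum_boole]
    refine Finset.sum_congr rfl (fun y _ => ?_)
    rw [hχB]; dsimp only; split <;> norm_num
  -- the master count
  have hNp : ∀ s t : Bool, ((univ.filter fun g : Equiv.Perm (Fin k) =>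
      decide (g a < g b) = s ∧ decide (g b < g c) = t).card : ℝ) = wt s t * m := by
    intro s t
    rw [npair_eq a b c hab hbc hac]
    unfold wt
    push_cast
    split <;> norm_num <;> rfl
  have hfib : ∀ p : (Fin n → Bool) × (Fin n → Bool),
      ((univ.filter fun σ : Fin n → Equiv.Perm (Fin k) =>
        (pairVec a b σ, pairVec b c σ) = p).card : ℝ)
      = (m:ℝ)^n * ∏ v, wt (p.1 v) (p.2 v) := by
    intro p
    have e : (univ.filter fun σ : Fin n → Equiv.Perm (Fin k) =>
        (pairVec a b σ, pairVec b c σ) = p)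
        = Fintype.piFinset (fun v => univ.filter fun g : Equiv.Perm (Fin k) =>
            decide (g a < g b) = p.1 v ∧ decide (g b < g c) = p.2 v) := by
      ext σ
      simp only [Finset.mem_filter, Finset.mem_univ, true_and, Fintype.mem_piFinset,
        Prod.ext_iff, funext_iff, pairVec]
      constructor
      · intro h v; exact ⟨h.1 v, h.2 v⟩
      · intro h; exact ⟨fun v => (h v).1, fun v => (h v).2⟩
    rw [e, Fintype.card_piFinset]
    push_cast
    rw [Finset.prod_congr rfl (fun v _ => hNp (p.1 v) (p.2 v)), Finset.prod_mul_distrib,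
      Finset.prod_const, Finset.card_univ, Fintype.card_fin, mul_comm]
  have hABcount : ((univ.filter fun σ : Fin n → Equiv.Perm (Fin k) =>
        PivotalAt (f a b) i (pairVec a b σ) ∧ PivotalAt (f b c) j (pairVec b c σ)).card : ℝ)
      = (m:ℝ)^n * ∑ x : Fin n → Bool, ∑ y : Fin n → Bool,
          (∏ v, wt (x v) (y v)) * (χA x ^ 3 * χB y ^ 3) := by
    rw [← Finset.sum_boole]
    have e1 : ∑ σ : Fin n → Equiv.Perm (Fin k),
        (if PivotalAt (f a b) i (pairVec a b σ) ∧ PivotalAt (f b c) j (pairVec b c σ)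
          then (1:ℝ) else 0)
        = ∑ σ : Fin n → Equiv.Perm (Fin k), χA (pairVec a b σ) * χB (pairVec b c σ) := by
      refine Finset.sum_congr rfl (fun σ _ => ?_)
      rw [hχA, hχB]; dsimp only
      by_cases h1 : PivotalAt (f a b) i (pairVec a b σ) <;>
        by_cases h2 : PivotalAt (f b c) j (pairVec b c σ) <;> simp [h1, h2]
    rw [e1,
      ← Finset.sum_fiberwise_of_maps_to
        (g := fun σ : Fin n → Equiv.Perm (Fin k) => (pairVec a b σ, pairVec b c σ))
        (t := (univ : Finset ((Fin n → Bool) × (Fin n → Bool))))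
        (fun σ _ => Finset.mem_univ _)
        (fun σ => χA (pairVec a b σ) * χB (pairVec b c σ))]
    have e2 : ∀ p : (Fin n → Bool) × (Fin n → Bool),
        ∑ σ ∈ univ.filter (fun σ : Fin n → Equiv.Perm (Fin k) =>
            (pairVec a b σ, pairVec b c σ) = p), χA (pairVec a b σ) * χB (pairVec b c σ)
        = ((m:ℝ)^n * ∏ v, wt (p.1 v) (p.2 v)) * (χA p.1 * χB p.2) := by
      intro p
      have e3 : ∑ σ ∈ univ.filter (fun σ : Fin n → Equiv.Perm (Fin k) =>
            (pairVec a b σ, pairVec b c σ) = p), χA (pairVec a b σ) * χB (pairVec b c σ)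
          = ∑ _σ ∈ univ.filter (fun σ : Fin n → Equiv.Perm (Fin k) =>
            (pairVec a b σ, pairVec b c σ) = p), χA p.1 * χB p.2 := by
        refine Finset.sum_congr rfl (fun σ hσ => ?_)
        rw [Finset.mem_filter] at hσ
        have h1 : pairVec a b σ = p.1 := congrArg Prod.fst hσ.2
        have h2 : pairVec b c σ = p.2 := congrArg Prod.snd hσ.2
        rw [h1, h2]
      rw [e3, Finset.sum_const, nsmul_eq_mul, hfib p]
    rw [Finset.sum_congr rfl (fun p _ => e2 p)]
    rw [Fintype.sum_prod_type]
    rw [Finset.mul_sum]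
    refine Finset.sum_congr rfl (fun x _ => ?_)
    rw [Finset.mul_sum]
    refine Finset.sum_congr rfl (fun y _ => ?_)
    have hA3 : χA x ^ 3 = χA x := by rw [hχA]; dsimp only; split <;> norm_num
    have hB3 : χB y ^ 3 = χB y := by rw [hχB]; dsimp only; split <;> norm_num
    rw [hA3, hB3]
    ring
  -- apply reverse hypercontractivity
  have hrhc := rhc n χA χB hχAn hχBn
  have hABge : (m:ℝ)^n * ((3/4:ℝ)^n * Real.sqrt
        (((univ.filter fun x : Fin n → Bool => PivotalAt (f a b) i x).card : ℝ)^3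
          * ((univ.filter fun y : Fin n → Bool => PivotalAt (f b c) j y).card : ℝ)^3))
      ≤ ((univ.filter fun σ : Fin n → Equiv.Perm (Fin k) =>
        PivotalAt (f a b) i (pairVec a b σ) ∧ PivotalAt (f b c) j (pairVec b c σ)).card : ℝ) := by
    rw [hABcount, ← hA2, ← hB2]
    apply mul_le_mul_of_nonneg_left hrhc (by positivity)
  -- strict lower bound from the influences
  have h2n : (0:ℝ) < 2^n := by positivity
  have hAgt : ε * 2^n
      < ((univ.filter fun x : Fin n → Bool => PivotalAt (f a b) i x).card : ℝ) :=
    (lt_div_iff₀ h2n).mp hi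
  have hBgt : ε * 2^n
      < ((univ.filter fun y : Fin n → Bool => PivotalAt (f b c) j y).card : ℝ) :=
    (lt_div_iff₀ h2n).mp hj
  have hεpos : (0:ℝ) < ε * 2^n := by positivity
  have hsqrt : (ε * 2^n)^3 < Real.sqrt
      (((univ.filter fun x : Fin n → Bool => PivotalAt (f a b) i x).card : ℝ)^3
        * ((univ.filter fun y : Fin n → Bool => PivotalAt (f b c) j y).card : ℝ)^3) := by
    set cA := ((univ.filter fun x : Fin n → Bool => PivotalAt (f a b) i x).card : ℝ)
    set cB := ((univ.filter fun y : Fin n → Bool => PivotalAt (f b c) j y).card : ℝ)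
    have hcA : 0 ≤ cA := Nat.cast_nonneg _
    have hcB : 0 ≤ cB := Nat.cast_nonneg _
    rw [Real.sqrt_mul (by positivity), sqrt_cube hcA, sqrt_cube hcB]
    have s1 : Real.sqrt (ε*2^n) < Real.sqrt cA := Real.sqrt_lt_sqrt (le_of_lt hεpos) hAgt
    have s2 : Real.sqrt (ε*2^n) < Real.sqrt cB := Real.sqrt_lt_sqrt (le_of_lt hεpos) hBgt
    have hsp : 0 < Real.sqrt (ε*2^n) := Real.sqrt_pos.mpr hεpos
    have c1 : Real.sqrt (ε*2^n) ^ 3 < Real.sqrt cA ^ 3 :=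
      pow_lt_pow_left₀ s1 (le_of_lt hsp) (by norm_num)
    have c2 : Real.sqrt (ε*2^n) ^ 3 < Real.sqrt cB ^ 3 :=
      pow_lt_pow_left₀ s2 (le_of_lt hsp) (by norm_num)
    have e : Real.sqrt (ε*2^n) ^ 3 * Real.sqrt (ε*2^n) ^ 3
        = ((Real.sqrt (ε*2^n)) ^ 2) ^ 3 := by ring
    calc (ε * 2^n)^3 = ((Real.sqrt (ε*2^n)) ^ 2) ^ 3 := by
          rw [Real.sq_sqrt (le_of_lt hεpos)]
      _ = Real.sqrt (ε*2^n) ^ 3 * Real.sqrt (ε*2^n) ^ 3 := by ring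
      _ < Real.sqrt cA ^ 3 * Real.sqrt cB ^ 3 := by
          apply mul_lt_mul'' c1 c2 (by positivity) (by positivity)
  have hstep1 : ε^3 * ((Fintype.card (Equiv.Perm (Fin k)) : ℝ))^n
      < ((univ.filter fun σ : Fin n → Equiv.Perm (Fin k) =>
        PivotalAt (f a b) i (pairVec a b σ) ∧ PivotalAt (f b c) j (pairVec b c σ)).card : ℝ) := by
    have hmn : (0:ℝ) < (m:ℝ)^n * (3/4:ℝ)^n := by
      have : (0:ℝ) < (m:ℝ) := by exact_mod_cast hmpos
      positivity
    have key : ε^3 * ((Fintype.card (Equiv.Perm (Fin k)) : ℝ))^n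
        = (m:ℝ)^n * ((3/4:ℝ)^n * (ε * 2^n)^3) := by
      rw [hK6]
      push_cast
      rw [mul_pow (6:ℝ) (m:ℝ) n]
      have e8 : ((2:ℝ)^n)^3 = ((2:ℝ)^3)^n := by
        rw [← pow_mul, ← pow_mul, Nat.mul_comm]
      have : (ε * 2^n)^3 = ε^3 * ((2:ℝ)^n)^3 := by ring
      rw [this, e8]
      have e6 : (6:ℝ)^n = (3/4:ℝ)^n * ((2:ℝ)^3)^n := by
        rw [← mul_pow]; norm_num
      rw [e6]
      ring
    rw [key]
    calc (m:ℝ)^n * ((3/4:ℝ)^n * (ε * 2^n)^3)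
        < (m:ℝ)^n * ((3/4:ℝ)^n * Real.sqrt
            (((univ.filter fun x : Fin n → Bool => PivotalAt (f a b) i x).card : ℝ)^3
              * ((univ.filter fun y : Fin n → Bool =>
                  PivotalAt (f b c) j y).card : ℝ)^3)) := by
          have := mul_lt_mul_of_pos_left hsqrt hmn
          calc (m:ℝ)^n * ((3/4:ℝ)^n * (ε * 2^n)^3)
              = (m:ℝ)^n * (3/4:ℝ)^n * (ε * 2^n)^3 := by ring
            _ < (m:ℝ)^n * (3/4:ℝ)^n * Real.sqrt _ := this
            _ = _ := by ring
      _ ≤ _ := hABge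
  -- step 2 : paradox count
  have hs2 := step2 f a b c i j hanti hab hbc hac hij
  have hs2' : ((univ.filter fun σ : Fin n → Equiv.Perm (Fin k) =>
        PivotalAt (f a b) i (pairVec a b σ) ∧ PivotalAt (f b c) j (pairVec b c σ)).card : ℝ)
      ≤ 36 * ((univ.filter fun σ : Fin n → Equiv.Perm (Fin k) =>
        ∃ p q r : Fin k, p ≠ q ∧ q ≠ r ∧ p ≠ r ∧
          f p q (pairVec p q σ) = true ∧ f q r (pairVec q r σ) = true ∧
          f r p (pairVec r p σ) = true).card : ℝ) := by
    exact_mod_cast hs2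
  have hKn : (0:ℝ) < ((Fintype.card (Equiv.Perm (Fin k)) : ℝ))^n := by
    have : (0:ℝ) < (Fintype.card (Equiv.Perm (Fin k)) : ℝ) := by exact_mod_cast hKpos
    positivity
  rw [div_lt_div_iff₀ (by norm_num) hKn]
  nlinarith [hstep1, hs2']
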